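/- Let X be a compact metric space with a dense sequence (α_n). If U is a finite union of open balls with rational radii centered at points α_i, then U is clopen and U ≠ X if and only if there exists a finite union V of such balls with U ∪ V = X and such that no point α_k satisfies simultaneously d(α_k, c) < r for some ball B(c,r) in U's decomposition and d(α_k, c') < r' for some ball B(c',r') in V's decomposition. -/

import Mathlib

/-- effective characterization of proper clopen sets via the dense
sequence. -/
theorem stmt_12 {X : Type*} [MetricSpace X] [CompactSpace X]
    (α : ℕ → X) (hdense : DenseRange α)
    (n : ℕ) (hn : 0 < n) (c : Fin n → ℕ) (q : Fin n → ℚ) (hq : ∀ i, 0 < q i) :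
    (IsClopen (⋃ i, Metric.ball (α (c i)) (q i)) ∧
        (⋃ i, Metric.ball (α (c i)) (q i)) ≠ Set.univ) ↔
      ∃ (m : ℕ) (_ : 0 < m) (e : Fin m → ℕ) (s : Fin m → ℚ),
        (∀ j, 0 < s j) ∧
        (⋃ i, Metric.ball (α (c i)) (q i)) ∪
            (⋃ j, Metric.ball (α (e j)) (s j)) = Set.univ ∧
        ¬∃ (k : ℕ) (i : Fin n) (j : Fin m),
          dist (α k) (α (c i)) < (q i : ℝ) ∧
          dist (α k) (α (e j)) < (s j : ℝ) := by
  classical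
  set U : Set X := ⋃ i, Metric.ball (α (c i)) (q i) with hU
  have hUopen : IsOpen U := isOpen_iUnion fun i => Metric.isOpen_ball
  constructor
  · rintro ⟨hclopen, hne⟩
    -- Uᶜ is compact, open, nonempty
    have hUcopen : IsOpen Uᶜ := hclopen.isClosed.isOpen_compl
    have hUccomp : IsCompact Uᶜ := (hUopen.isClosed_compl).isCompact
    have hUcne : Uᶜ.Nonempty := by
      rw [Set.nonempty_compl]; exact hne
    -- family of candidate balls
    set P : ℕ × ℚ → Prop := fun p => 0 < p.2 ∧ Metric.ball (α p.1) (p.2 : ℝ) ⊆ Uᶜ with hP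
    set F : ℕ × ℚ → Set X := fun p => if P p then Metric.ball (α p.1) (p.2 : ℝ) else ∅ with hF
    have hFopen : ∀ p, IsOpen (F p) := by
      intro p
      by_cases h : P p
      · rw [hF]; simp only [if_pos h]; exact Metric.isOpen_ball
      · rw [hF]; simp only [if_neg h]; exact isOpen_empty
    have hcover : Uᶜ ⊆ ⋃ p, F p := by
      intro x hx
      obtain ⟨ε, hε, hball⟩ := Metric.isOpen_iff.1 hUcopen x hx
      obtain ⟨i, hi⟩ := Metric.denseRange_iff.1 hdense x (ε / 3) (by linarith)
      obtain ⟨r, hr1, hr2⟩ := exists_rat_btwn (show (ε/3 : ℝ) < ε/2 by linarith)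
      have hrpos : (0:ℚ) < r := by
        have : (0:ℝ) < (r:ℝ) := lt_trans (by linarith) hr1
        exact_mod_cast this
      have hsub : Metric.ball (α i) (r : ℝ) ⊆ Uᶜ := by
        intro y hy
        apply hball
        have : dist y x ≤ dist y (α i) + dist (α i) x := dist_triangle _ _ _
        rw [Metric.mem_ball] at hy ⊢
        rw [dist_comm (α i) x] at this
        have := lt_of_le_of_lt this (by linarith [hy, hi] : dist y (α i) + dist x (α i) < ε)
        exact this
      have hPp : P (i, r) := ⟨hrpos, hsub⟩
      refine Set.mem_iUnion.2 ⟨(i, r), ?_⟩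
      rw [hF]; simp only [if_pos hPp]
      exact Metric.mem_ball.2 (lt_trans hi hr1)
    obtain ⟨t, ht⟩ := hUccomp.elim_finite_subcover F hFopen hcover
    set t' : Finset (ℕ × ℚ) := t.filter P with ht'
    have hcover' : Uᶜ ⊆ ⋃ p ∈ t', F p := by
      intro x hx
      obtain ⟨p, hpt, hpx⟩ := Set.mem_iUnion₂.1 (ht hx)
      have hPp : P p := by
        by_contra h
        simp [hF, if_neg h] at hpx
      exact Set.mem_iUnion₂.2 ⟨p, Finset.mem_filter.2 ⟨hpt, hPp⟩, hpx⟩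
    have ht'ne : t'.Nonempty := by
      obtain ⟨x, hx⟩ := hUcne
      obtain ⟨p, hpt, _⟩ := Set.mem_iUnion₂.1 (hcover' hx)
      exact ⟨p, hpt⟩
    set l := t'.toList with hl
    have hlne : l ≠ [] := by
      simp [hl, Finset.toList_eq_nil]
      exact ht'ne.ne_empty
    refine ⟨l.length, List.length_pos_iff.2 hlne, fun j => (l.get j).1, fun j => (l.get j).2,
      ?_, ?_, ?_⟩
    · intro j
      have : l.get j ∈ t' := Finset.mem_toList.1 (l.get_mem _)
      exact ((Finset.mem_filter.1 this).2).1
    · apply Set.eq_univ_of_forall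
      intro x
      by_cases hx : x ∈ U
      · exact Or.inl hx
      · right
        obtain ⟨p, hpt, hpx⟩ := Set.mem_iUnion₂.1 (hcover' hx)
        have hPp : P p := (Finset.mem_filter.1 hpt).2
        obtain ⟨j, hj⟩ := List.mem_iff_get.1 (Finset.mem_toList.2 hpt)
        refine Set.mem_iUnion.2 ⟨j, ?_⟩
        show x ∈ Metric.ball (α (l.get j).1) ((l.get j).2 : ℝ)
        rw [show l.get j = p from hj]
        have : x ∈ Metric.ball (α p.1) ((p.2 : ℝ)) := by
          rw [hF] at hpx; simpa [if_pos hPp] using hpx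
        exact this
    · rintro ⟨k, i, j, hki, hkj⟩
      have hmem : l.get j ∈ t' := Finset.mem_toList.1 (l.get_mem _)
      have hPp : P (l.get j) := (Finset.mem_filter.1 hmem).2
      have h1 : α k ∈ U := Set.mem_iUnion.2 ⟨i, Metric.mem_ball.2 hki⟩
      have h2 : α k ∈ Uᶜ := hPp.2 (Metric.mem_ball.2 hkj)
      exact h2 h1
  · rintro ⟨m, hm, e, s, hs, hcov, hdisj⟩
    set V : Set X := ⋃ j, Metric.ball (α (e j)) (s j) with hV
    have hVopen : IsOpen V := isOpen_iUnion fun j => Metric.isOpen_ball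
    have hUV : U ∩ V = ∅ := by
      by_contra h
      obtain ⟨x, hx⟩ := Set.nonempty_iff_ne_empty.2 h
      obtain ⟨k, hk⟩ := hdense.exists_mem_open (hUopen.inter hVopen) ⟨x, hx⟩
      obtain ⟨i, hi⟩ := Set.mem_iUnion.1 hk.1
      obtain ⟨j, hj⟩ := Set.mem_iUnion.1 hk.2
      exact hdisj ⟨k, i, j, Metric.mem_ball.1 hi, Metric.mem_ball.1 hj⟩
    have hVc : V = Uᶜ := by
      apply Set.eq_of_subset_of_subset
      · intro x hx hxU
        exact Set.eq_empty_iff_forall_notMem.1 hUV x ⟨hxU, hx⟩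
      · intro x hx
        rcases (Set.eq_univ_iff_forall.1 hcov x) with h | h
        · exact absurd h hx
        · exact h
    constructor
    · refine ⟨?_, hUopen⟩
      rw [← compl_compl U, ← hVc]
      exact hVopen.isClosed_compl
    · intro h
      have hx : α (e ⟨0, hm⟩) ∈ V :=
        Set.mem_iUnion.2 ⟨⟨0, hm⟩, Metric.mem_ball_self (by exact_mod_cast hs _)⟩
      rw [hVc] at hx
      exact hx (h ▸ Set.mem_univ _)
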